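/- Let g : ℝ → ℝ be a continuously differentiable function supported in an interval of length a > 0. Then ‖g'‖_{L²} ≥ (π/a) ‖g‖_{L²}. -/

import Mathlib

open Real MeasureTheory Filter Topology intervalIntegral

lemma aux_left (f : ℝ → ℝ) (x : ℝ) (hf : DifferentiableAt ℝ f x)
    (h0 : ∀ y, y < x → f y = 0) : f x = 0 ∧ deriv f x = 0 := by
  have hev : f =ᶠ[𝓝[<] x] fun _ => (0:ℝ) := by
    filter_upwards [self_mem_nhdsWithin] with y hy using h0 y hy
  have hx : f x = 0 := by
    have h1 : Tendsto f (𝓝[<] x) (𝓝 (f x)) :=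
      hf.continuousAt.tendsto.mono_left nhdsWithin_le_nhds
    have h2 : Tendsto f (𝓝[<] x) (𝓝 0) := tendsto_const_nhds.congr' hev.symm
    exact tendsto_nhds_unique h1 h2
  refine ⟨hx, ?_⟩
  have hs : Tendsto (slope f x) (𝓝[≠] x) (𝓝 (deriv f x)) :=
    hasDerivAt_iff_tendsto_slope.mp hf.hasDerivAt
  have hs' : Tendsto (slope f x) (𝓝[<] x) (𝓝 (deriv f x)) :=
    hs.mono_left (nhdsWithin_mono x (fun y hy => ne_of_lt hy))
  have hz : Tendsto (slope f x) (𝓝[<] x) (𝓝 0) := by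
    apply tendsto_const_nhds.congr'
    filter_upwards [self_mem_nhdsWithin] with y hy
    simp [slope, h0 y hy, hx]
  exact tendsto_nhds_unique hs' hz

lemma aux_right (f : ℝ → ℝ) (x : ℝ) (hf : DifferentiableAt ℝ f x)
    (h0 : ∀ y, x < y → f y = 0) : f x = 0 ∧ deriv f x = 0 := by
  have hev : f =ᶠ[𝓝[>] x] fun _ => (0:ℝ) := by
    filter_upwards [self_mem_nhdsWithin] with y hy using h0 y hy
  have hx : f x = 0 := by
    have h1 : Tendsto f (𝓝[>] x) (𝓝 (f x)) :=
      hf.continuousAt.tendsto.mono_left nhdsWithin_le_nhds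
    have h2 : Tendsto f (𝓝[>] x) (𝓝 0) := tendsto_const_nhds.congr' hev.symm
    exact tendsto_nhds_unique h1 h2
  refine ⟨hx, ?_⟩
  have hs : Tendsto (slope f x) (𝓝[≠] x) (𝓝 (deriv f x)) :=
    hasDerivAt_iff_tendsto_slope.mp hf.hasDerivAt
  have hs' : Tendsto (slope f x) (𝓝[>] x) (𝓝 (deriv f x)) :=
    hs.mono_left (nhdsWithin_mono x (fun y hy => ne_of_gt hy))
  have hz : Tendsto (slope f x) (𝓝[>] x) (𝓝 0) := by
    apply tendsto_const_nhds.congr'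
    filter_upwards [self_mem_nhdsWithin] with y hy
    simp [slope, h0 y hy, hx]
  exact tendsto_nhds_unique hs' hz

lemma tendsto_sq_div (f s : ℝ → ℝ) (p d m : ℝ) (hm : m ≠ 0)
    (hf : HasDerivAt f d p) (hs : HasDerivAt s m p) (hf0 : f p = 0) (hs0 : s p = 0)
    (l : Filter ℝ) (hl : l ≤ 𝓝[≠] p) :
    Tendsto (fun x => f x ^ 2 / s x) l (𝓝 0) := by
  have hsf : Tendsto (slope f p) l (𝓝 d) :=
    (hasDerivAt_iff_tendsto_slope.mp hf).mono_left hl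
  have hss : Tendsto (slope s p) l (𝓝 m) :=
    (hasDerivAt_iff_tendsto_slope.mp hs).mono_left hl
  have hfc : Tendsto f l (𝓝 0) := by
    have := hf.continuousAt.tendsto.mono_left (hl.trans nhdsWithin_le_nhds)
    rwa [hf0] at this
  have key : Tendsto (fun x => f x * (slope f p x / slope s p x)) l (𝓝 (0 * (d / m))) :=
    hfc.mul (hsf.div hss hm)
  rw [zero_mul] at key
  apply key.congr'
  have hne : {p}ᶜ ∈ l := hl self_mem_nhdsWithin
  filter_upwards [hne] with x hx
  have hxp : x - p ≠ 0 := sub_ne_zero.mpr hx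
  simp only [slope, hf0, hs0, sub_zero, vsub_eq_sub, div_eq_inv_mul]
  rcases eq_or_ne (s x) 0 with h | h
  · simp [h, hxp]
  · field_simp
    ring

lemma hasDerivAt_F (g : ℝ → ℝ) (c k : ℝ) (x : ℝ)
    (hgx : HasDerivAt g (deriv g x) x) (hsx : Real.sin (k*(x-c)) ≠ 0) :
    HasDerivAt (fun y => k * g y ^ 2 * Real.cos (k*(y-c)) / Real.sin (k*(y-c)))
      ((deriv g x)^2 - k^2 * g x^2
        - (deriv g x - k * g x * (Real.cos (k*(x-c)) / Real.sin (k*(x-c))))^2) x := by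
  have hin : HasDerivAt (fun y => k*(y-c)) k x := by
    simpa using ((hasDerivAt_id x).sub_const c).const_mul k
  have hs : HasDerivAt (fun y => Real.sin (k*(y-c))) (Real.cos (k*(x-c)) * k) x :=
    (Real.hasDerivAt_sin _).comp x hin
  have hco : HasDerivAt (fun y => Real.cos (k*(y-c))) (-Real.sin (k*(x-c)) * k) x :=
    (Real.hasDerivAt_cos _).comp x hin
  have hN : HasDerivAt (fun y => k * g y ^ 2 * Real.cos (k*(y-c)))
      ((k * ((2:ℕ) * g x ^ 1 * deriv g x)) * Real.cos (k*(x-c))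
        + (k * g x ^ 2) * (-Real.sin (k*(x-c)) * k)) x :=
    (((hgx.pow 2).const_mul k).mul hco)
  have := hN.div hs hsx
  refine this.congr_deriv ?_
  have hpy : Real.sin (k*(x-c))^2 + Real.cos (k*(x-c))^2 = 1 := Real.sin_sq_add_cos_sq _
  field_simp
  push_cast
  nlinarith [sq_nonneg (Real.sin (k*(x-c))), sq_nonneg (g x), hpy]


lemma key_ineq (g : ℝ → ℝ) (a c : ℝ) (ha : 0 < a) (hg : ContDiff ℝ 1 g)
    (hgc : g c = 0) (hgb : g (c+a) = 0) :
    (π/a)^2 * ∫ x in c..(c+a), g x ^ 2 ≤ ∫ x in c..(c+a), (deriv g x)^2 := by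
  set k := π / a with hk_def
  have hk : 0 < k := div_pos Real.pi_pos ha
  have hgdiff : Differentiable ℝ g := hg.differentiable one_ne_zero
  have hgc2 : Continuous g := hg.continuous
  have hg' : Continuous (deriv g) := hg.continuous_deriv le_rfl
  set h : ℝ → ℝ := fun x => (deriv g x)^2 - k^2 * g x ^2 with hh_def
  have hcont : Continuous h := by fun_prop
  set F : ℝ → ℝ := fun y => k * g y ^ 2 * Real.cos (k*(y-c)) / Real.sin (k*(y-c)) with hF_def
  -- positivity of sin on the open interval
  have hsin : ∀ x ∈ Set.Ioo c (c+a), 0 < Real.sin (k*(x-c)) := by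
    intro x hx
    apply Real.sin_pos_of_pos_of_lt_pi
    · exact mul_pos hk (by linarith [hx.1])
    · calc k*(x-c) < k*a := by
            apply mul_lt_mul_of_pos_left _ hk
            linarith [hx.2]
         _ = π := by rw [hk_def]; field_simp
  -- FTC inequality on interior subintervals
  have main : ∀ u v, u ∈ Set.Ioo c (c+a) → v ∈ Set.Ioo c (c+a) → u ≤ v →
      F v - F u ≤ (∫ x in c..v, h x) - ∫ x in c..u, h x := by
    intro u v hu hv huv
    have hsub : Set.uIcc u v ⊆ Set.Ioo c (c+a) := by
      rw [Set.uIcc_of_le huv]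
      exact Set.Icc_subset_Ioo hu.1 hv.2
    set ψ : ℝ → ℝ := fun x => h x
        - (deriv g x - k * g x * (Real.cos (k*(x-c)) / Real.sin (k*(x-c))))^2 with hψ_def
    have hψcont : ContinuousOn ψ (Set.uIcc u v) := by
      apply ContinuousOn.sub hcont.continuousOn
      apply ContinuousOn.pow
      apply ContinuousOn.sub hg'.continuousOn
      apply ContinuousOn.mul (by exact (continuous_const.mul hgc2).continuousOn)
      apply ContinuousOn.div (by fun_prop) (by fun_prop)
      intro x hx
      exact ne_of_gt (hsin x (hsub hx))
    have hftc : ∫ x in u..v, ψ x = F v - F u := by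
      apply integral_eq_sub_of_hasDerivAt
      · intro x hx
        exact hasDerivAt_F g c k x (hgdiff x).hasDerivAt (ne_of_gt (hsin x (hsub hx)))
      · exact hψcont.intervalIntegrable
    have hint_h : IntervalIntegrable h volume u v := hcont.intervalIntegrable _ _
    have hint_sq : IntervalIntegrable
        (fun x => (deriv g x - k * g x * (Real.cos (k*(x-c)) / Real.sin (k*(x-c))))^2)
        volume u v := by
      have : (fun x => (deriv g x - k * g x * (Real.cos (k*(x-c)) / Real.sin (k*(x-c))))^2)
          = fun x => h x - ψ x := by funext x; simp [hψ_def]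
      rw [this]
      exact hint_h.sub hψcont.intervalIntegrable
    have hsplit : ∫ x in u..v, ψ x
        = (∫ x in u..v, h x)
          - ∫ x in u..v, (deriv g x - k * g x * (Real.cos (k*(x-c)) / Real.sin (k*(x-c))))^2 :=
      integral_sub hint_h hint_sq
    have hsqnn : 0 ≤ ∫ x in u..v,
        (deriv g x - k * g x * (Real.cos (k*(x-c)) / Real.sin (k*(x-c))))^2 :=
      integral_nonneg huv (fun x _ => sq_nonneg _)
    have hvu : ∫ x in u..v, h x = (∫ x in c..v, h x) - ∫ x in c..u, h x := by
      rw [← integral_interval_sub_left]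
      · exact hcont.intervalIntegrable _ _
      · exact hcont.intervalIntegrable _ _
    linarith [hftc ▸ hsplit, hvu ▸ (by linarith [hsplit, hftc] : F v - F u ≤ ∫ x in u..v, h x)]
  -- primitive and its continuity
  set Φ : ℝ → ℝ := fun x => ∫ t in c..x, h t with hΦ_def
  have hΦcont : Continuous Φ :=
    intervalIntegral.continuous_primitive (fun a b => hcont.intervalIntegrable a b) c
  -- boundary limits of F
  have hsin_deriv : ∀ p : ℝ, HasDerivAt (fun y => Real.sin (k*(y-c))) (Real.cos (k*(p-c)) * k) p := by
    intro p
    have hin : HasDerivAt (fun y => k*(y-c)) k p := by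
      simpa using ((hasDerivAt_id p).sub_const c).const_mul k
    exact (Real.hasDerivAt_sin _).comp p hin
  have hFc : Tendsto F (𝓝[>] c) (𝓝 0) := by
    have hlim : Tendsto (fun x => g x ^ 2 / Real.sin (k*(x-c))) (𝓝[>] c) (𝓝 0) := by
      apply tendsto_sq_div g (fun y => Real.sin (k*(y-c))) c (deriv g c) (Real.cos (k*(c-c)) * k)
        (by simp; positivity) (hgdiff c).hasDerivAt (hsin_deriv c) hgc (by simp)
      exact nhdsWithin_mono c (fun y hy => ne_of_gt hy)
    have hcos : Tendsto (fun x => k * Real.cos (k*(x-c))) (𝓝[>] c) (𝓝 (k * Real.cos (k*(c-c)))) := by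
      apply Tendsto.mono_left _ nhdsWithin_le_nhds
      exact (continuous_const.mul (Real.continuous_cos.comp (by fun_prop))).tendsto c
    have := hcos.mul hlim
    rw [mul_zero] at this
    apply this.congr
    intro x
    simp only [hF_def]
    ring
  have hFb : Tendsto F (𝓝[<] (c+a)) (𝓝 0) := by
    have hs0 : Real.sin (k*((c+a)-c)) = 0 := by
      have : k*((c+a)-c) = π := by rw [hk_def, add_sub_cancel_left]; field_simp
      rw [this, Real.sin_pi]
    have hlim : Tendsto (fun x => g x ^ 2 / Real.sin (k*(x-c))) (𝓝[<] (c+a)) (𝓝 0) := by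
      apply tendsto_sq_div g (fun y => Real.sin (k*(y-c))) (c+a) (deriv g (c+a))
        (Real.cos (k*((c+a)-c)) * k) ?_ (hgdiff _).hasDerivAt (hsin_deriv _) hgb hs0
      · exact nhdsWithin_mono _ (fun y hy => ne_of_lt hy)
      · have : k*((c+a)-c) = π := by rw [hk_def, add_sub_cancel_left]; field_simp
        rw [this, Real.cos_pi]
        simpa using ne_of_gt hk
    have hcos : Tendsto (fun x => k * Real.cos (k*(x-c))) (𝓝[<] (c+a))
        (𝓝 (k * Real.cos (k*((c+a)-c)))) := by
      apply Tendsto.mono_left _ nhdsWithin_le_nhds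
      exact (continuous_const.mul (Real.continuous_cos.comp (by fun_prop))).tendsto _
    have := hcos.mul hlim
    rw [mul_zero] at this
    apply this.congr
    intro x
    simp only [hF_def]
    ring
  -- approach via t → 0⁺
  have htu : Tendsto (fun t : ℝ => c + t) (𝓝[>] 0) (𝓝[>] c) := by
    rw [tendsto_nhdsWithin_iff]
    constructor
    · apply Tendsto.mono_left _ nhdsWithin_le_nhds
      simpa using (continuous_add_left c).tendsto (0:ℝ)
    · filter_upwards [self_mem_nhdsWithin] with t ht
      simpa using ht
  have htv : Tendsto (fun t : ℝ => c + a - t) (𝓝[>] 0) (𝓝[<] (c+a)) := by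
    rw [tendsto_nhdsWithin_iff]
    constructor
    · apply Tendsto.mono_left _ nhdsWithin_le_nhds
      simpa using (continuous_sub_left (c+a)).tendsto (0:ℝ)
    · filter_upwards [self_mem_nhdsWithin] with t ht
      simp only [Set.mem_Iio]
      have : (0:ℝ) < t := ht
      linarith
  have hB : Tendsto (fun t : ℝ => F (c+a-t) - F (c+t)) (𝓝[>] 0) (𝓝 0) := by
    have := (hFb.comp htv).sub (hFc.comp htu)
    simpa using this
  have hA : Tendsto (fun t : ℝ => Φ (c+a-t) - Φ (c+t)) (𝓝[>] 0) (𝓝 (Φ (c+a) - Φ c)) := by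
    have h1 : Tendsto (fun t : ℝ => Φ (c+a-t)) (𝓝[>] 0) (𝓝 (Φ (c+a))) :=
      (hΦcont.tendsto _).comp (htv.mono_right nhdsWithin_le_nhds)
    have h2 : Tendsto (fun t : ℝ => Φ (c+t)) (𝓝[>] 0) (𝓝 (Φ c)) :=
      (hΦcont.tendsto _).comp (htu.mono_right nhdsWithin_le_nhds)
    exact h1.sub h2
  have hev : ∀ᶠ t in 𝓝[>] (0:ℝ), F (c+a-t) - F (c+t) ≤ Φ (c+a-t) - Φ (c+t) := by
    filter_upwards [Ioo_mem_nhdsGT_of_mem (Set.mem_Ico.mpr ⟨le_refl 0, half_pos ha⟩)] with t ht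
    apply main
    · constructor <;> [linarith [ht.1]; linarith [ht.2]]
    · constructor <;> [linarith [ht.1, ht.2]; linarith [ht.1]]
    · linarith [ht.1, ht.2]
  have hfin : (0:ℝ) ≤ Φ (c+a) - Φ c := le_of_tendsto_of_tendsto hB hA hev
  have hΦc : Φ c = 0 := by simp [hΦ_def]
  have hΦv : Φ (c+a) = (∫ x in c..(c+a), (deriv g x)^2) - k^2 * ∫ x in c..(c+a), g x ^ 2 := by
    simp only [hΦ_def, hh_def]
    rw [integral_sub (f := fun x => deriv g x ^ 2) (g := fun x => k^2 * g x ^ 2) ((hg'.pow 2).intervalIntegrable _ _)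
      ((continuous_const.mul (hgc2.pow 2)).intervalIntegrable _ _)]
    congr 1
    rw [intervalIntegral.integral_const_mul]
  rw [hΦv, hΦc] at hfin
  linarith


/-- Poincaré (Friedrichs) inequality with optimal constant: if `g` is `C¹` with
compact support contained in an interval `[c, c+a]` of length `a > 0`, then
`(π/a) ‖g‖_{L²(ℝ)} ≤ ‖g'‖_{L²(ℝ)}`. -/
theorem poincare_optimal (g : ℝ → ℝ) (a c : ℝ) (ha : 0 < a)
    (hg : ContDiff ℝ 1 g) (hsupp : Function.support g ⊆ Set.Icc c (c + a)) :
    (Real.pi / a) * Real.sqrt (∫ x : ℝ, (g x) ^ 2) ≤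
      Real.sqrt (∫ x : ℝ, (deriv g x) ^ 2) := by
  have hgdiff : Differentiable ℝ g := hg.differentiable one_ne_zero
  have hzl : ∀ y, y < c → g y = 0 := by
    intro y hy
    by_contra h
    have := hsupp (Function.mem_support.mpr h)
    exact absurd this.1 (not_le.mpr hy)
  have hzr : ∀ y, c + a < y → g y = 0 := by
    intro y hy
    by_contra h
    have := hsupp (Function.mem_support.mpr h)
    exact absurd this.2 (not_le.mpr hy)
  obtain ⟨hgc, hdc⟩ := aux_left g c (hgdiff c) hzl
  obtain ⟨hgb, hdb⟩ := aux_right g (c+a) (hgdiff _) hzr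
  have hderiv_out : ∀ y, y ∉ Set.Ioc c (c+a) → deriv g y = 0 := by
    intro y hy
    rcases lt_trichotomy y c with h | h | h
    · have hev : g =ᶠ[𝓝 y] fun _ => (0:ℝ) := by
        filter_upwards [Iio_mem_nhds h] with z hz using hzl z hz
      rw [hev.deriv_eq]; simp
    · rw [h]; exact hdc
    · have h2 : c + a < y := by
        by_contra h2
        exact hy ⟨h, not_lt.mp h2⟩
      have hev : g =ᶠ[𝓝 y] fun _ => (0:ℝ) := by
        filter_upwards [Ioi_mem_nhds h2] with z hz using hzr z hz
      rw [hev.deriv_eq]; simp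
  have hg_out : ∀ y, y ∉ Set.Ioc c (c+a) → g y = 0 := by
    intro y hy
    rcases lt_trichotomy y c with h | h | h
    · exact hzl y h
    · rw [h]; exact hgc
    · have h2 : c + a < y := by
        by_contra h2
        exact hy ⟨h, not_lt.mp h2⟩
      exact hzr y h2
  have hle : c ≤ c + a := by linarith
  have e1 : (∫ x : ℝ, (g x) ^ 2) = ∫ x in c..(c+a), g x ^ 2 := by
    rw [intervalIntegral.integral_of_le hle]
    exact (setIntegral_eq_integral_of_forall_compl_eq_zero
      (fun x hx => by rw [hg_out x hx]; ring)).symm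
  have e2 : (∫ x : ℝ, (deriv g x) ^ 2) = ∫ x in c..(c+a), (deriv g x) ^ 2 := by
    rw [intervalIntegral.integral_of_le hle]
    exact (setIntegral_eq_integral_of_forall_compl_eq_zero
      (fun x hx => by rw [hderiv_out x hx]; ring)).symm
  have key := key_ineq g a c ha hg hgc hgb
  rw [e1, e2]
  have hI1 : 0 ≤ ∫ x in c..(c+a), g x ^ 2 :=
    intervalIntegral.integral_nonneg hle (fun x _ => sq_nonneg _)
  have hknn : 0 ≤ π / a := le_of_lt (div_pos Real.pi_pos ha)
  calc π / a * Real.sqrt (∫ x in c..(c+a), g x ^ 2)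
      = Real.sqrt ((π/a)^2 * ∫ x in c..(c+a), g x ^ 2) := by
        rw [Real.sqrt_mul (sq_nonneg _), Real.sqrt_sq hknn]
    _ ≤ Real.sqrt (∫ x in c..(c+a), (deriv g x)^2) := Real.sqrt_le_sqrt key
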